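/- Let L ⊆ (Z/d)^{2n} be Lagrangian, g ∈ L* a linear functional, and a ∈ (Z/d)^{2n} with g(b) = [a,b] for all b ∈ L. Then the stabilizer state satisfies Π_L^g = d^{-n} Σ_{b ∈ L + a} A(b), i.e., its expansion in the phase space point operator basis is the normalized indicator function of the affine subspace L + a. -/

import Mathlib

open Matrix

/-- The phase space `(ℤ/d)^{2n}` as pairs `(a_X, a_Z)`. -/
abbrev PS (d n : ℕ) := (Fin n → ZMod d) × (Fin n → ZMod d)

/-- `ω = exp(2πi/d)`. -/
noncomputable def omegaC (d : ℕ) : ℂ := Complex.exp (2 * Real.pi * Complex.I / d)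

/-- `ω^k` for an exponent `k : ℤ/d`. -/
noncomputable def chi (d : ℕ) (k : ZMod d) : ℂ := omegaC d ^ k.val

/-- Dot product over `ℤ/d`. -/
def dotZ {d n : ℕ} (x y : Fin n → ZMod d) : ZMod d := ∑ i, x i * y i

/-- The standard symplectic form `[a,b] = a_X·b_Z − b_X·a_Z`. -/
def symp {d n : ℕ} (a b : PS d n) : ZMod d := dotZ a.1 b.2 - dotZ b.1 a.2

/-- The Weyl-Heisenberg operator `T(a) = τ^{-a_X·a_Z} ⨂ᵢ Z^{(a_Z)_i} X^{(a_X)_i}`,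
where `τ = ω^{(d+1)/2} = ω^{2⁻¹ mod d}` for odd `d`. -/
noncomputable def WH (d n : ℕ) (a : PS d n) :
    Matrix (Fin n → ZMod d) (Fin n → ZMod d) ℂ :=
  Matrix.of fun q q' =>
    if q = q' + a.1 then chi d ((2⁻¹ : ZMod d) * (-(dotZ a.1 a.2)) + dotZ a.2 q) else 0

/-- An isotropic subspace of dimension `n`, i.e. a Lagrangian subspace. -/
def IsLagrangian (d n : ℕ) (L : Submodule (ZMod d) (PS d n)) : Prop :=
  (∀ a ∈ L, ∀ b ∈ L, symp a b = 0) ∧ Module.finrank (ZMod d) L = n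

/-- The stabilizer projection `Π_L^g = d^{-n} Σ_{b∈L} ω^{g(b)} T(b)`. -/
noncomputable def stabProj (d n : ℕ) [Fact d.Prime]
    (L : Submodule (ZMod d) (PS d n)) (g : L →ₗ[ZMod d] ZMod d) :
    Matrix (Fin n → ZMod d) (Fin n → ZMod d) ℂ :=
  letI : Fintype L := Fintype.ofFinite L
  ((d : ℂ) ^ n)⁻¹ • ∑ b : L, chi d (g b) • WH d n (b : PS d n)

/-- The phase space point operator `A(a) = d^{-n} Σ_b ω^{[a,b]} T(b)`. -/
noncomputable def psPoint (d n : ℕ) [Fact d.Prime] (a : PS d n) :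
    Matrix (Fin n → ZMod d) (Fin n → ZMod d) ℂ :=
  ((d : ℂ) ^ n)⁻¹ • ∑ b : PS d n, chi d (symp a b) • WH d n b

lemma omega_prim (d : ℕ) (hd : d ≠ 0) : IsPrimitiveRoot (omegaC d) d :=
  Complex.isPrimitiveRoot_exp d hd

lemma omega_pow_d (d : ℕ) (hd : d ≠ 0) : omegaC d ^ d = 1 := (omega_prim d hd).pow_eq_one

lemma omega_pow_mod (d : ℕ) (hd : d ≠ 0) (k : ℕ) : omegaC d ^ (k % d) = omegaC d ^ k := by
  conv_rhs => rw [← Nat.mod_add_div k d]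
  rw [pow_add, pow_mul, omega_pow_d d hd, one_pow, mul_one]

lemma chi_zero (d : ℕ) [NeZero d] : chi d 0 = 1 := by simp [chi]

lemma chi_add (d : ℕ) [NeZero d] (x y : ZMod d) : chi d (x + y) = chi d x * chi d y := by
  have hd : d ≠ 0 := NeZero.ne d
  rw [chi, chi, chi, ZMod.val_add, omega_pow_mod d hd, pow_add]

lemma chi_eq_one_iff (d : ℕ) [NeZero d] (x : ZMod d) : chi d x = 1 ↔ x = 0 := by
  have hd : d ≠ 0 := NeZero.ne d
  rw [chi, (omega_prim d hd).pow_eq_one_iff_dvd]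
  constructor
  · intro h
    have := Nat.eq_zero_of_dvd_of_lt h (ZMod.val_lt x)
    · exact (ZMod.val_eq_zero x).mp (by omega)
  · rintro rfl; simp

lemma sum_chi (d : ℕ) [NeZero d] {M : Type*} [AddCommGroup M] [Module (ZMod d) M]
    [Fintype M] (φ : M →ₗ[ZMod d] ZMod d) :
    ∑ b : M, chi d (φ b) = if ∀ b, φ b = 0 then (Fintype.card M : ℂ) else 0 := by
  split_ifs with h
  · simp [h, chi_zero]
  · push_neg at h
    obtain ⟨b₀, hb₀⟩ := h
    have key : chi d (φ b₀) * ∑ b : M, chi d (φ b) = ∑ b : M, chi d (φ b) := by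
      rw [Finset.mul_sum]
      calc ∑ b : M, chi d (φ b₀) * chi d (φ b) = ∑ b : M, chi d (φ (b₀ + b)) := by
            simp [map_add, chi_add]
        _ = ∑ b : M, chi d (φ b) :=
            Fintype.sum_bijective _ (Equiv.addLeft b₀).bijective _ _ (fun b => rfl)
    have hne : chi d (φ b₀) ≠ 1 := fun hc => hb₀ ((chi_eq_one_iff d _).mp hc)
    have hz : (chi d (φ b₀) - 1) * ∑ b : M, chi d (φ b) = 0 := by
      rw [sub_mul, key, one_mul, sub_self]
    rcases mul_eq_zero.mp hz with h' | h'
    · exact absurd (sub_eq_zero.mp h') hne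
    · exact h'

lemma symp_add_left {d n : ℕ} (x y z : PS d n) : symp (x + y) z = symp x z + symp y z := by
  simp [symp, dotZ, Prod.fst_add, Prod.snd_add, add_mul, mul_add, Finset.sum_add_distrib]
  ring

lemma symp_smul_left {d n : ℕ} (c : ZMod d) (x z : PS d n) : symp (c • x) z = c * symp x z := by
  simp [symp, dotZ, Prod.smul_fst, Prod.smul_snd, Finset.mul_sum, mul_sub, mul_assoc,
    mul_left_comm]

lemma symp_neg_eq {d n : ℕ} (x y : PS d n) : symp y x = -symp x y := by
  simp only [symp]; ring

lemma symp_add_right {d n : ℕ} (x y z : PS d n) : symp x (y + z) = symp x y + symp x z := by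
  simp [symp, dotZ, Prod.fst_add, Prod.snd_add, add_mul, mul_add, Finset.sum_add_distrib]
  ring

lemma symp_smul_right {d n : ℕ} (c : ZMod d) (x z : PS d n) : symp x (c • z) = c * symp x z := by
  simp [symp, dotZ, Prod.smul_fst, Prod.smul_snd, Finset.mul_sum, mul_sub, mul_assoc,
    mul_left_comm]

def sympB (d n : ℕ) : LinearMap.BilinForm (ZMod d) (PS d n) :=
  LinearMap.mk₂ (ZMod d) symp
    (fun x y z => symp_add_left x y z)
    (fun c x z => symp_smul_left c x z)
    (fun x y z => symp_add_right x y z)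
    (fun c x z => symp_smul_right c x z)

lemma sympB_nondegenerate (d n : ℕ) : (sympB d n).Nondegenerate := by
  refine (fun hsep : LinearMap.SeparatingLeft (sympB d n) => ⟨hsep, fun y hy => hsep y fun x => by rw [show (sympB d n) y x = -(sympB d n) x y from symp_neg_eq x y, hy x, neg_zero]⟩) ?_
  intro a h
  have h1 : ∀ i, a.1 i = 0 := fun i => by
    have := h (0, Pi.single i 1)
    simpa [sympB, symp, dotZ, Pi.single_apply, mul_ite, ite_mul, Finset.sum_ite_eq',
      Finset.sum_ite_eq, sub_eq_zero] using this
  have h2 : ∀ i, a.2 i = 0 := fun i => by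
    have := h (Pi.single i 1, 0)
    simpa [sympB, symp, dotZ, Pi.single_apply, mul_ite, ite_mul, Finset.sum_ite_eq',
      Finset.sum_ite_eq, sub_eq_zero, neg_eq_zero] using this
  exact Prod.ext (funext h1) (funext h2)

lemma sympB_refl (d n : ℕ) : (sympB d n).IsRefl := by
  intro x y hxy
  have h : (sympB d n) y x = -(sympB d n) x y := symp_neg_eq x y
  rw [h, hxy, neg_zero]

lemma finrank_PS (d n : ℕ) [Fact d.Prime] : Module.finrank (ZMod d) (PS d n) = 2 * n := by
  rw [Module.finrank_prod, Module.finrank_pi]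
  simp [two_mul]

lemma orthogonal_eq (d n : ℕ) [Fact d.Prime] (L : Submodule (ZMod d) (PS d n))
    (hL : IsLagrangian d n L) : (sympB d n).orthogonal L = L := by
  have hle : L ≤ (sympB d n).orthogonal L := by
    intro x hx
    rw [LinearMap.BilinForm.mem_orthogonal_iff]
    intro b hb
    exact hL.1 b hb x hx
  refine (Submodule.eq_of_le_of_finrank_le hle ?_).symm
  rw [hL.2, LinearMap.BilinForm.finrank_orthogonal (sympB_nondegenerate d n) L,
    finrank_PS, hL.2]
  omega


/-- If `g = [a,·]|_L`, then `Π_L^g = d^{-n} Σ_{b ∈ L+a} A(b)`: the stabilizer state is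
the normalized indicator function of the affine subspace `L + a` in the phase space
point operator basis. -/
theorem stabProj_eq_sum_psPoint (d n : ℕ) [Fact d.Prime] (hodd : Odd d)
    (L : Submodule (ZMod d) (PS d n)) (hL : IsLagrangian d n L)
    (g : L →ₗ[ZMod d] ZMod d) (a : PS d n)
    (ha : ∀ b : L, g b = symp a (b : PS d n)) :
    stabProj d n L g =
      (letI : Fintype L := Fintype.ofFinite L
       ((d : ℂ) ^ n)⁻¹ • ∑ b : L, psPoint d n ((b : PS d n) + a)) := by
  classical
  have hdp : d.Prime := Fact.out
  haveI : NeZero d := ⟨hdp.ne_zero⟩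
  letI : Fintype L := Fintype.ofFinite L
  have hdn : ((d : ℂ) ^ n) ≠ 0 := pow_ne_zero _ (Nat.cast_ne_zero.mpr hdp.ne_zero)
  have hcard : (Fintype.card L : ℂ) = (d : ℂ) ^ n := by
    have h1 : Fintype.card L = Fintype.card (ZMod d) ^ Module.finrank (ZMod d) L :=
      Module.card_eq_pow_finrank (K := ZMod d) (V := L)
    rw [ZMod.card, hL.2] at h1
    exact_mod_cast h1
  -- key character sum
  have key : ∀ c : PS d n, (∑ b : L, chi d (symp ((b : PS d n) + a) c))
      = (if c ∈ L then ((d : ℂ) ^ n) * chi d (symp a c) else 0) := by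
    intro c
    have step1 : (∑ b : L, chi d (symp ((b : PS d n) + a) c))
        = (∑ b : L, chi d (symp (b : PS d n) c)) * chi d (symp a c) := by
      rw [Finset.sum_mul]
      refine Finset.sum_congr rfl fun b _ => ?_
      rw [symp_add_left, chi_add]
    set φ : L →ₗ[ZMod d] ZMod d := ((sympB d n).flip c).comp L.subtype with hφ
    have hφval : ∀ b : L, symp (b : PS d n) c = φ b := fun b => rfl
    have step2 : (∑ b : L, chi d (symp (b : PS d n) c))
        = if ∀ b : L, φ b = 0 then (Fintype.card L : ℂ) else 0 := by
      rw [← sum_chi d φ]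
      exact Finset.sum_congr rfl fun b _ => by rw [hφval]
    have hiff : (∀ b : L, φ b = 0) ↔ c ∈ L := by
      constructor
      · intro h
        rw [← orthogonal_eq d n L hL, LinearMap.BilinForm.mem_orthogonal_iff]
        intro b hb; exact h ⟨b, hb⟩
      · intro hc b
        exact hL.1 (b : PS d n) b.2 c hc
    rw [step1, step2, hcard]
    by_cases hc : c ∈ L
    · rw [if_pos (hiff.mpr hc), if_pos hc]
    · rw [if_neg (fun h => hc (hiff.mp h)), if_neg hc, zero_mul]
  -- main computation
  show stabProj d n L g = ((d : ℂ) ^ n)⁻¹ • ∑ b : L, psPoint d n ((b : PS d n) + a)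
  unfold stabProj psPoint
  have rhs1 : (∑ b : L, ((d : ℂ) ^ n)⁻¹ •
        ∑ c : PS d n, chi d (symp ((b : PS d n) + a) c) • WH d n c)
      = ((d : ℂ) ^ n)⁻¹ • ∑ c : PS d n,
        (∑ b : L, chi d (symp ((b : PS d n) + a) c)) • WH d n c := by
    rw [← Finset.smul_sum, Finset.sum_comm]
    congr 1
    exact Finset.sum_congr rfl fun c _ => by rw [Finset.sum_smul]
  rw [rhs1]
  have rhs2 : (∑ c : PS d n,
        (∑ b : L, chi d (symp ((b : PS d n) + a) c)) • WH d n c)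
      = ∑ c : PS d n,
        (if c ∈ L then (((d : ℂ) ^ n) * chi d (symp a c)) • WH d n c else 0) := by
    refine Finset.sum_congr rfl fun c _ => ?_
    rw [key c, ite_smul, zero_smul]
  rw [rhs2]
  have rhs3 : (∑ c : PS d n,
        (if c ∈ L then (((d : ℂ) ^ n) * chi d (symp a c)) • WH d n c else 0))
      = ∑ c : L, (((d : ℂ) ^ n) * chi d (symp a (c : PS d n))) • WH d n (c : PS d n) := by
    rw [← Finset.sum_filter]
    exact Finset.sum_subtype _ (by simp) _
  rw [rhs3]
  have rhs4 : (∑ c : L, (((d : ℂ) ^ n) * chi d (symp a (c : PS d n))) • WH d n (c : PS d n))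
      = ((d : ℂ) ^ n) • ∑ c : L, chi d (g c) • WH d n (c : PS d n) := by
    rw [Finset.smul_sum]
    refine Finset.sum_congr rfl fun c _ => ?_
    rw [ha c, mul_smul]
  rw [rhs4, smul_smul, smul_smul, mul_assoc, inv_mul_cancel₀ hdn, mul_one]
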